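/- arXiv:1308.3396 — 3 statements merged into one kernel-verified Lean document; each statement's English description precedes it below -/
import Mathlib

section
/- Let j ≥ 1 be an integer, let p be an odd integer with p ≥ 2j + 1, and let g(n) = 2p + 1 - ⌈n/3⌉ for integers n ≥ 1. Then for every integer n₀ with 1 ≤ n₀ ≤ 3p, the row index of the j-th iterate satisfies j + 1 ≤ ⌈g^j(n₀)/3⌉ ≤ p - j. -/
lemma ceil3_le (m a : ℤ) : ⌈(m : ℚ) / 3⌉ ≤ a ↔ m ≤ 3 * a := by
  rw [Int.ceil_le, div_le_iff₀ (by norm_num : (0:ℚ) < 3)]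
  constructor
  · intro h
    have : (m : ℚ) ≤ ((3 * a : ℤ) : ℚ) := by push_cast; linarith
    exact_mod_cast this
  · intro h
    have : (m : ℚ) ≤ ((3 * a : ℤ) : ℚ) := by exact_mod_cast h
    push_cast at this; linarith

lemma le_ceil3 (m a : ℤ) : a ≤ ⌈(m : ℚ) / 3⌉ ↔ 3 * a - 2 ≤ m := by
  constructor
  · intro h
    by_contra hc
    push_neg at hc
    have := (ceil3_le m (a - 1)).mpr (by omega)
    omega
  · intro h
    by_contra hc
    push_neg at hc
    have := (ceil3_le m (a - 1)).mp (by omega)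
    omega

/-- For the `p × 3` card trick function `g n = 2p + 1 - ⌈n/3⌉` with `p` odd and
`p ≥ 2j + 1` (`j ≥ 1`), the row index of the `j`-th iterate satisfies
`j + 1 ≤ ⌈g^[j] n₀ / 3⌉ ≤ p - j` for every `1 ≤ n₀ ≤ 3p`. -/
theorem card_trick_p3_jth_iterate_row_bounds
    (j : ℕ) (hj : 1 ≤ j) (p : ℤ) (hp : Odd p) (hpj : 2 * (j : ℤ) + 1 ≤ p)
    (g : ℤ → ℤ) (hg : ∀ n : ℤ, 1 ≤ n → g n = 2 * p + 1 - ⌈(n : ℚ) / 3⌉) :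
    ∀ n₀ : ℤ, 1 ≤ n₀ → n₀ ≤ 3 * p →
      (j : ℤ) + 1 ≤ ⌈(g^[j] n₀ : ℚ) / 3⌉ ∧ ⌈(g^[j] n₀ : ℚ) / 3⌉ ≤ p - j := by
  revert hpj
  induction j, hj using Nat.le_induction with
  | base =>
    intro hpj n₀ h1 h2
    have hr1 : 1 ≤ ⌈(n₀ : ℚ) / 3⌉ := (le_ceil3 n₀ 1).mpr (by omega)
    have hr2 : ⌈(n₀ : ℚ) / 3⌉ ≤ p := (ceil3_le n₀ p).mpr (by omega)
    rw [Function.iterate_one, hg n₀ h1]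
    constructor
    · refine (le_ceil3 _ _).mpr ?_; push_cast; omega
    · refine (ceil3_le _ _).mpr ?_; push_cast; omega
  | succ j hj IH =>
    intro hpj n₀ h1 h2
    have hpj' : 2 * (j : ℤ) + 1 ≤ p := by push_cast at hpj ⊢; omega
    obtain ⟨hl, hu⟩ := IH hpj' n₀ h1 h2
    set m := g^[j] n₀ with hm
    have hjz : (1 : ℤ) ≤ (j : ℤ) := by exact_mod_cast hj
    have hml : 3 * ((j : ℤ) + 1) - 2 ≤ m := (le_ceil3 m _).mp hl
    have hmu : m ≤ 3 * (p - j) := (ceil3_le m _).mp hu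
    have hm1 : 1 ≤ m := by omega
    rw [Function.iterate_succ_apply', ← hm, hg m hm1]
    have hpj2 : 2 * ((j : ℤ) + 1) + 1 ≤ p := by push_cast at hpj ⊢; omega
    constructor
    · refine (le_ceil3 _ _).mpr ?_; push_cast; omega
    · refine (ceil3_le _ _).mpr ?_; push_cast; omega
end

section
/- Let p, q ≥ 3 be odd integers, let i ≥ 0 be an integer, and let h(n) = ((q+1)/2)·p + 1 - ⌈n/q⌉ for integers n ≥ 1. If n = qk - l with 1 ≤ k ≤ p, 0 ≤ l ≤ q - 1, and the row index k satisfies (p+q)/2 + iq + 1 ≤ k ≤ (p+q)/2 + iq + q, then ((p+1)/2 - (i+1))·q - (q-1) ≤ h(n) ≤ ((p+1)/2 - (i+1))·q; that is, h(n) lies in row (p+1)/2 - (i+1). -/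
/-- For the `p × q` card trick function (`p, q ≥ 3` odd), a position in the block
of rows `(p+q)/2 + iq + 1` through `(p+q)/2 + iq + q` maps to row
`(p+1)/2 - (i+1)` in one iteration. -/
theorem card_trick_pq_block_maps_to_row
    (p q : ℤ) (hp : Odd p) (hq : Odd q) (hp3 : 3 ≤ p) (hq3 : 3 ≤ q)
    (i : ℤ) (hi : 0 ≤ i)
    (h : ℤ → ℤ)
    (hh : ∀ n : ℤ, 1 ≤ n → h n = (q + 1) / 2 * p + 1 - ⌈(n : ℚ) / q⌉) :
    ∀ n k l : ℤ, n = q * k - l → 1 ≤ k → k ≤ p → 0 ≤ l → l ≤ q - 1 →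
      (p + q) / 2 + i * q + 1 ≤ k → k ≤ (p + q) / 2 + i * q + q →
      ((p + 1) / 2 - (i + 1)) * q - (q - 1) ≤ h n ∧
        h n ≤ ((p + 1) / 2 - (i + 1)) * q := by
  intro n k l hn hk1 hkp hl0 hl1 hklo hkhi
  have hq0 : (0:ℤ) < q := by omega
  have hn1 : 1 ≤ n := by nlinarith
  have hqQ : (0:ℚ) < (q:ℚ) := by exact_mod_cast hq0
  have hceil : ⌈(n : ℚ) / q⌉ = k := by
    rw [Int.ceil_eq_iff]
    constructor
    · rw [lt_div_iff₀ hqQ]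
      have : (k - 1) * q < n := by nlinarith
      exact_mod_cast this
    · rw [div_le_iff₀ hqQ]
      have : n ≤ k * q := by nlinarith
      exact_mod_cast this
  have hhn := hh n hn1
  rw [hceil] at hhn
  obtain ⟨a, ha⟩ := hp
  obtain ⟨b, hb⟩ := hq
  have h1 : (q + 1) / 2 = b + 1 := by omega
  have h2 : (p + 1) / 2 = a + 1 := by omega
  have h3 : (p + q) / 2 = a + b + 1 := by omega
  rw [h1] at hhn
  rw [h3] at hklo hkhi
  rw [h2]
  subst ha hb
  constructor <;> nlinarith [hhn, hklo, hkhi]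
end

section
/- Let p, q ≥ 3 be odd integers and let h(n) = ((q+1)/2)·p + 1 - ⌈n/q⌉ for integers n ≥ 1. Then for every integer n₀ with 1 ≤ n₀ ≤ pq there exists a positive integer m such that the m-th iterate satisfies h^m(n₀) = (pq+1)/2; that is, (pq+1)/2 is a stable fixed point of h reached from every initial position in finitely many iterations. -/
/-- For the `p × q` card trick function (`p, q ≥ 3` odd), every starting position
`1 ≤ n₀ ≤ pq` reaches the midpoint `(pq+1)/2` after finitely many iterations:
the midpoint is a stable fixed point. -/
theorem card_trick_pq_stable_fixed_point
    (p q : ℤ) (hp : Odd p) (hq : Odd q) (hp3 : 3 ≤ p) (hq3 : 3 ≤ q)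
    (h : ℤ → ℤ)
    (hh : ∀ n : ℤ, 1 ≤ n → h n = (q + 1) / 2 * p + 1 - ⌈(n : ℚ) / q⌉) :
    ∀ n₀ : ℤ, 1 ≤ n₀ → n₀ ≤ p * q →
      ∃ m : ℕ, 0 < m ∧ h^[m] n₀ = (p * q + 1) / 2 := by
  obtain ⟨a, hpa⟩ := hp
  obtain ⟨b, hqb⟩ := hq
  have ha1 : 1 ≤ a := by omega
  have hb1 : 1 ≤ b := by omega
  have hq0 : (0:ℤ) < q := by omega
  have hqQ : (0:ℚ) < (q:ℚ) := by exact_mod_cast hq0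
  set M : ℤ := (p*q+1)/2 with hMdef
  have hMeq : M = 2*a*b + a + b + 1 := by
    rw [hMdef, show p*q+1 = 2*(2*a*b+a+b+1) by rw [hpa, hqb]; ring,
      Int.mul_ediv_cancel_left _ (by norm_num)]
  have hpq : p*q = 2*M - 1 := by rw [hpa, hqb, hMeq]; ring
  have hC : (q+1)/2 = b+1 := by omega
  have hbp : (b+1)*p + 1 = M + a + 1 := by rw [hpa, hMeq]; ring
  have haq : (a+1)*q = M + b := by rw [hqb, hMeq]; ring
  -- one step of the iteration
  have step : ∀ n : ℤ, 1 ≤ n → n ≤ 2*M - 1 →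
      1 ≤ h n ∧ h n ≤ 2*M - 1 ∧
        ((h n - M).natAbs < (n - M).natAbs ∨ h n = M) := by
    intro n hn1 hn2
    have hhn := hh n hn1
    rw [hC] at hhn
    set k : ℤ := ⌈(n:ℚ)/q⌉ with hkdef
    have hk2 : n ≤ k*q := by
      have h1 : (n:ℚ)/q ≤ (k:ℚ) := by rw [hkdef]; exact Int.le_ceil _
      rw [div_le_iff₀ hqQ] at h1
      exact_mod_cast h1
    have hk1 : (k-1)*q < n := by
      have h0 : (k:ℚ) < (n:ℚ)/q + 1 := by rw [hkdef]; exact Int.ceil_lt_add_one _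
      have h2 : ((k:ℚ)-1) < (n:ℚ)/q := by linarith
      rw [lt_div_iff₀ hqQ] at h2
      exact_mod_cast h2
    have hhn' : h n = M + a + 1 - k := by rw [hhn]; linarith [hbp]
    have haq' : a*q = M + b - q := by linarith [haq, show (a+1)*q = a*q + q from by ring]
    rcases lt_trichotomy n M with hlt | heq | hgt
    · -- n < M
      have hkub : k ≤ a + 1 := by
        have h5 : (k-1)*q < (a+1)*q := by linarith
        have := (mul_lt_mul_iff_left₀ hq0).mp h5
        omega
      have h6 : (a+1+(n-M))*q < n := by
        have hid : n - (a+1+(n-M))*q = b*(2*(M-n)-1) := by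
          rw [hqb]
          linear_combination (-1 : ℤ) * haq + (a+1) * hqb
        nlinarith [mul_le_mul_of_nonneg_left (show (1:ℤ) ≤ 2*(M-n)-1 by omega)
          (show (0:ℤ) ≤ b by omega)]
      have hklb : a + 1 + (n-M) < k := by
        have h7 : (a+1+(n-M))*q < k*q := by linarith
        have := (mul_lt_mul_iff_left₀ hq0).mp h7
        omega
      refine ⟨by omega, by omega, Or.inl (by omega)⟩
    · -- n = M
      have hkub : k ≤ a + 1 := by
        have h5 : (k-1)*q < (a+1)*q := by linarith
        have := (mul_lt_mul_iff_left₀ hq0).mp h5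
        omega
      have hklb : a + 1 ≤ k := by
        have h7 : a*q < k*q := by omega
        have := (mul_lt_mul_iff_left₀ hq0).mp h7
        omega
      have : h n = M := by omega
      exact ⟨by omega, by omega, Or.inr this⟩
    · -- n > M
      have hklb : a + 1 ≤ k := by
        have h7 : a*q < k*q := by omega
        have := (mul_lt_mul_iff_left₀ hq0).mp h7
        omega
      have h6 : n ≤ (a+(n-M))*q := by
        have hid : (a+(n-M))*q - n = b*(2*(n-M)-1) - 1 := by
          rw [hqb]
          linear_combination haq - (a+1) * hqb
        nlinarith [mul_le_mul_of_nonneg_left (show (1:ℤ) ≤ 2*(n-M)-1 by omega)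
          (show (0:ℤ) ≤ b by omega)]
      have hkub : k ≤ a + (n-M) := by
        have h5 : (k-1)*q < (a+(n-M))*q := by linarith
        have := (mul_lt_mul_iff_left₀ hq0).mp h5
        omega
      refine ⟨by omega, by omega, Or.inl (by omega)⟩
  -- induction on the distance to the midpoint
  have main : ∀ N : ℕ, ∀ n : ℤ, 1 ≤ n → n ≤ 2*M - 1 → (n - M).natAbs ≤ N →
      ∃ m : ℕ, 0 < m ∧ h^[m] n = M := by
    intro N
    induction N with
    | zero =>
      intro n h1 h2 h3
      obtain ⟨g1, g2, g3⟩ := step n h1 h2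
      refine ⟨1, one_pos, ?_⟩
      simp only [Function.iterate_one]
      rcases g3 with g | g
      · omega
      · exact g
    | succ N ih =>
      intro n h1 h2 h3
      obtain ⟨g1, g2, g3⟩ := step n h1 h2
      rcases g3 with g | g
      · obtain ⟨m, hm, hit⟩ := ih (h n) g1 g2 (by omega)
        exact ⟨m+1, by omega, by rw [Function.iterate_succ_apply]; exact hit⟩
      · exact ⟨1, one_pos, by simpa using g⟩
  intro n₀ h1 h2
  exact main ((n₀ - M).natAbs) n₀ h1 (by linarith [hpq]) le_rfl
end
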